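/- Fix N ∈ ℕ, e ∈ {0, …, N}, and p ∈ [0, 1]. For the modified Erdős–Rényi model over a ground set of N potential edges with input edge set of size e, the probability that the output differs from the input in exactly k edges equals ∑_{ℓ=0}^{k} C(e, ℓ) · C(N − e, k − ℓ) · p^{N − k} · (1 − p)^{k}, and this equals C(N, k) · p^{N − k} · (1 − p)^{k}. In particular, with p = 1/(1 + exp(−ε/A)) this probability equals C(N, k) · exp(−εk/A) / (1 + exp(−ε/A))^{N}, matching the probability that the graph exponential mechanism outputs a graph at Fréchet–Nikodym distance k from the input. -/

import Mathlib

/-- **Probability that the modified Erdős–Rényi model differs in exactly `k` edges.**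
Fix a ground set `K` of `N` potential edges and an input edge set `E ⊆ K` with `|E| = e`,
and `p ∈ [0,1]`. The probability that the output differs from the input in exactly `k`
edges (i.e. the total mass of outputs `F ⊆ K` with `|E Δ F| = k`, where each output `F`
has probability `p^(N−|E Δ F|)·(1−p)^(|E Δ F|)`) equals
`∑_{ℓ=0}^{k} C(e,ℓ)·C(N−e,k−ℓ)·p^(N−k)·(1−p)^k`, which equals `C(N,k)·p^(N−k)·(1−p)^k`.
In particular, with `p = 1/(1+exp(−ε/A))` it equals `C(N,k)·exp(−εk/A)/(1+exp(−ε/A))^N`,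
matching the probability that the graph exponential mechanism outputs a graph at
Fréchet–Nikodym distance `k` from the input. -/
theorem modified_ER_dist_k_prob {α : Type*} [DecidableEq α]
    (K E : Finset α) (hE : E ⊆ K) (N e : ℕ) (hN : K.card = N) (he : E.card = e)
    (k : ℕ) (hk : k ≤ N) (p : ℝ) (hp0 : 0 ≤ p) (hp1 : p ≤ 1)
    (A : ℕ) (hA : 1 ≤ A) (ε : ℝ) (hε : 0 ≤ ε) :
    (∑ F ∈ K.powerset.filter (fun F => (symmDiff E F).card = k),
          p ^ (N - (symmDiff E F).card) * (1 - p) ^ (symmDiff E F).card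
        = ∑ ℓ ∈ Finset.range (k + 1),
            (e.choose ℓ : ℝ) * ((N - e).choose (k - ℓ) : ℝ) * p ^ (N - k) * (1 - p) ^ k)
    ∧ (∑ F ∈ K.powerset.filter (fun F => (symmDiff E F).card = k),
          p ^ (N - (symmDiff E F).card) * (1 - p) ^ (symmDiff E F).card
        = (N.choose k : ℝ) * p ^ (N - k) * (1 - p) ^ k)
    ∧ (p = 1 / (1 + Real.exp (-ε / A)) →
        ∑ F ∈ K.powerset.filter (fun F => (symmDiff E F).card = k),
            p ^ (N - (symmDiff E F).card) * (1 - p) ^ (symmDiff E F).card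
          = (N.choose k : ℝ) * Real.exp (-ε * k / A) / (1 + Real.exp (-ε / A)) ^ N) := by
  have he' : e ≤ N := hN ▸ he ▸ Finset.card_le_card hE
  -- card of the filtered set
  have hcard : (K.powerset.filter (fun F => (symmDiff E F).card = k)).card
      = N.choose k := by
    rw [← hN, ← Finset.card_powersetCard]
    apply Finset.card_bij (fun F _ => symmDiff E F)
    · intro F hF
      simp only [Finset.mem_filter, Finset.mem_powerset] at hF
      rw [Finset.mem_powersetCard]
      refine ⟨?_, hF.2⟩
      intro x hx
      simp only [Finset.mem_symmDiff] at hx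
      rcases hx with ⟨h, _⟩ | ⟨h, _⟩
      · exact hE h
      · exact hF.1 h
    · intro F hF F' hF' h
      have := congrArg (fun S => symmDiff E S) h
      simpa [symmDiff_symmDiff_cancel_left] using this
    · intro D hD
      rw [Finset.mem_powersetCard] at hD
      refine ⟨symmDiff E D, ?_, by simp [symmDiff_symmDiff_cancel_left]⟩
      simp only [Finset.mem_filter, Finset.mem_powerset]
      constructor
      · intro x hx
        simp only [Finset.mem_symmDiff] at hx
        rcases hx with ⟨h, _⟩ | ⟨h, _⟩
        · exact hE h
        · exact hD.1 h
      · simp [symmDiff_symmDiff_cancel_left, hD.2]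
  have hsum : ∑ F ∈ K.powerset.filter (fun F => (symmDiff E F).card = k),
      p ^ (N - (symmDiff E F).card) * (1 - p) ^ (symmDiff E F).card
      = (N.choose k : ℝ) * p ^ (N - k) * (1 - p) ^ k := by
    calc _ = ∑ _F ∈ K.powerset.filter (fun F => (symmDiff E F).card = k),
            p ^ (N - k) * (1 - p) ^ k :=
          Finset.sum_congr rfl fun F hF => by rw [(Finset.mem_filter.mp hF).2]
      _ = _ := by rw [Finset.sum_const, hcard, nsmul_eq_mul]; ring
  -- Vandermonde
  have hvdm : ∑ ℓ ∈ Finset.range (k + 1), (e.choose ℓ) * ((N - e).choose (k - ℓ))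
      = N.choose k := by
    calc ∑ ℓ ∈ Finset.range (k + 1), (e.choose ℓ) * ((N - e).choose (k - ℓ))
        = (e + (N - e)).choose k := by
          rw [Nat.add_choose_eq, Finset.Nat.sum_antidiagonal_eq_sum_range_succ
            (fun i j => e.choose i * (N - e).choose j)]
      _ = N.choose k := by rw [Nat.add_sub_cancel' he']
  refine ⟨?_, hsum, ?_⟩
  · rw [hsum, ← hvdm]
    push_cast
    rw [Finset.sum_mul, Finset.sum_mul]
  · intro hp
    set x := Real.exp (-ε / A) with hx
    have hx0 : 0 < x := Real.exp_pos _
    have hx1 : (0:ℝ) < 1 + x := by linarith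
    have h1p : 1 - p = x / (1 + x) := by
      rw [hp]; field_simp; ring
    have hxk : x ^ k = Real.exp (-ε * k / A) := by
      rw [hx, ← Real.exp_nat_mul]
      ring_nf
    rw [hsum, h1p, hp, ← hxk, div_pow, div_pow, one_pow]
    rw [eq_div_iff (by positivity)]
    have hsplit : (1 + x) ^ N = (1 + x) ^ (N - k) * (1 + x) ^ k := by
      rw [← pow_add, Nat.sub_add_cancel hk]
    field_simp [hsplit]
    rw [hsplit]; ring
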